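/- For fixed x ≥ 0 and n > 2x, the number of ranked unlabeled tree shapes with n+2 leaves whose root splits into subtrees with x+1 and n−x+1 leaves equals binomial(n, x)·e_x·e_{n−x}, where e_i = R_{i+1} is the number of ranked unlabeled tree shapes with i internal nodes. -/
import Mathlib


/-- A binary perfect phylogeny: a rooted binary tree with positive integer leaf labels
(leaf counts). -/
inductive PP : Type
  | leaf : ℕ → PP
  | node : PP → PP → PP
deriving DecidableEq

namespace PP

/-- Total number of samples of a binary perfect phylogeny. -/
def size : PP → ℕ
  | leaf n => n
  | node l r => l.size + r.size

/-- One elementary coarsening step: collapsing a cherry (two pendant leaf edges into a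
single leaf carrying the sum of the counts), anywhere in the tree; children are unordered. -/
inductive Step : PP → PP → Prop
  | cherry (a b : ℕ) : Step (node (leaf a) (leaf b)) (leaf (a + b))
  | swap (s t : PP) : Step (node s t) (node t s)
  | left {t t' : PP} (s : PP) : Step t t' → Step (node t s) (node t' s)
  | right {t t' : PP} (s : PP) : Step t t' → Step (node s t) (node s t')

/-- `π.Refines σ` (written `π ≤ σ` in the paper) iff `σ` is obtained from `π` by
sequentially collapsing cherries. -/
def Refines (π σ : PP) : Prop := Relation.ReflTransGen Step π σ

end PP

/-- An unranked unlabeled rooted binary tree (with ordered children; unordered tree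
shapes are obtained as the quotient by `Shape.Equiv`). -/
inductive Shape : Type
  | leaf : Shape
  | node : Shape → Shape → Shape

namespace Shape

/-- Number of leaves. -/
def leaves : Shape → ℕ
  | leaf => 1
  | node l r => l.leaves + r.leaves

/-- Equality of rooted binary trees as unordered (unlabeled) tree shapes. -/
inductive Equiv : Shape → Shape → Prop
  | leaf : Equiv leaf leaf
  | node {a b c d : Shape} : Equiv a c → Equiv b d → Equiv (node a b) (node c d)
  | swap {a b c d : Shape} : Equiv a d → Equiv b c → Equiv (node a b) (node c d)

/-- The perfect phylogeny `P(T)` obtained from a tree shape by assigning count 1 to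
every leaf. -/
def toPP : Shape → PP
  | leaf => PP.leaf 1
  | node l r => PP.node l.toPP r.toPP

end Shape

/-- `shapeCount n` is the number of unranked unlabeled binary tree shapes with `n`
leaves (the `n`-th Wedderburn–Etherington number). -/
noncomputable def shapeCount (n : ℕ) : ℕ :=
  Nat.card {q : Quot Shape.Equiv // ∃ t : Shape, Quot.mk _ t = q ∧ t.leaves = n}

/-- `Gc π` is the number of unranked unlabeled tree shapes compatible with the binary
perfect phylogeny `π`, i.e. whose associated perfect phylogeny refines `π`. -/
noncomputable def Gc (π : PP) : ℕ :=
  Nat.card {q : Quot Shape.Equiv //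
    ∃ t : Shape, Quot.mk _ t = q ∧ PP.Refines t.toPP π}

/-- A rooted binary unlabeled tree with ranks attached to internal nodes (ordered
children; ranked unlabeled tree shapes are the quotient by `RTree.Equiv`). -/
inductive RTree : Type
  | leaf : RTree
  | node : ℕ → RTree → RTree → RTree

namespace RTree

/-- Number of leaves. -/
def leaves : RTree → ℕ
  | leaf => 1
  | node _ l r => l.leaves + r.leaves

/-- Multiset of internal node ranks. -/
def ranks : RTree → Multiset ℕ
  | leaf => 0
  | node k l r => k ::ₘ (l.ranks + r.ranks)

/-- Ranks strictly increase away from the root, starting above the bound `b`. -/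
def IncreasingFrom : ℕ → RTree → Prop
  | _, leaf => True
  | b, node k l r => b < k ∧ IncreasingFrom k l ∧ IncreasingFrom k r

/-- `t.Valid n`: `t` is a ranked tree with `n` leaves whose internal nodes carry the
ranks `1, …, n-1`, each exactly once, totally ordered consistently with the tree
(ranks increase from the root toward the leaves). -/
def Valid (t : RTree) (n : ℕ) : Prop :=
  t.leaves = n ∧ t.ranks = (Finset.Icc 1 (n - 1)).val ∧ IncreasingFrom 0 t

/-- Forget the ranking. -/
def shape : RTree → Shape
  | leaf => Shape.leaf
  | node _ l r => Shape.node l.shape r.shape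

/-- Equality of ranked trees as unordered (unlabeled) ranked tree shapes. -/
inductive Equiv : RTree → RTree → Prop
  | leaf : Equiv leaf leaf
  | node {k : ℕ} {a b c d : RTree} :
      Equiv a c → Equiv b d → Equiv (node k a b) (node k c d)
  | swap {k : ℕ} {a b c d : RTree} :
      Equiv a d → Equiv b c → Equiv (node k a b) (node k c d)

end RTree

/-- `rankedCount n` is the number of ranked unlabeled tree shapes with `n` leaves
(the `(n-1)`-th Euler zigzag number `R_n`). -/
noncomputable def rankedCount (n : ℕ) : ℕ :=
  Nat.card {q : Quot RTree.Equiv // ∃ t : RTree, Quot.mk _ t = q ∧ t.Valid n}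

/-- `GTc π` is the number of ranked unlabeled tree shapes compatible with the binary
perfect phylogeny `π`: ranked tree shapes on `π.size` leaves whose underlying unranked
shape is compatible with `π`. -/
noncomputable def GTc (π : PP) : ℕ :=
  Nat.card {q : Quot RTree.Equiv //
    ∃ t : RTree, Quot.mk _ t = q ∧ t.Valid π.size ∧ PP.Refines t.shape.toPP π}

/-- `t` splits at the root into subtrees with `a` and `b` leaves (in either order). -/
def RTree.splitsInto : RTree → ℕ → ℕ → Prop
  | .leaf, _, _ => False
  | .node _ l r, a, b => (l.leaves = a ∧ r.leaves = b) ∨ (l.leaves = b ∧ r.leaves = a)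

namespace RTree

/-- Apply a function to all ranks. -/
def map (f : ℕ → ℕ) : RTree → RTree
  | leaf => leaf
  | node k l r => node (f k) (map f l) (map f r)

@[simp] lemma leaves_map (f : ℕ → ℕ) : ∀ t : RTree, (t.map f).leaves = t.leaves
  | leaf => rfl
  | node k l r => by simp [map, leaves, leaves_map f l, leaves_map f r]

@[simp] lemma ranks_map (f : ℕ → ℕ) : ∀ t : RTree, (t.map f).ranks = t.ranks.map f
  | leaf => rfl
  | node k l r => by simp [map, ranks, ranks_map f l, ranks_map f r]

lemma map_map (f g : ℕ → ℕ) : ∀ t : RTree, (t.map f).map g = t.map (g ∘ f)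
  | leaf => rfl
  | node k l r => by simp [map, map_map f g l, map_map f g r]

lemma map_congr_id (f : ℕ → ℕ) : ∀ t : RTree, (∀ r ∈ t.ranks, f r = r) → t.map f = t
  | leaf, _ => rfl
  | node k l r, h => by
    have hk : f k = k := h k (by simp [ranks])
    have hl := map_congr_id f l (fun a ha => h a (by simp [ranks, ha]))
    have hr := map_congr_id f r (fun a ha => h a (by simp [ranks, ha]))
    simp [map, hk, hl, hr]

lemma Equiv.refl : ∀ t : RTree, Equiv t t
  | .leaf => .leaf
  | .node _ l r => .node (Equiv.refl l) (Equiv.refl r)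

lemma Equiv.symm {a b : RTree} (h : Equiv a b) : Equiv b a := by
  induction h with
  | leaf => exact .leaf
  | node _ _ ih1 ih2 => exact .node ih1 ih2
  | swap _ _ ih1 ih2 => exact .swap ih2 ih1

lemma Equiv.trans {a b c : RTree} (h1 : Equiv a b) (h2 : Equiv b c) : Equiv a c := by
  induction h1 generalizing c with
  | leaf => exact h2
  | node hac hbd ih1 ih2 =>
    cases h2 with
    | node h3 h4 => exact .node (ih1 h3) (ih2 h4)
    | swap h3 h4 => exact .swap (ih1 h3) (ih2 h4)
  | swap had hbc ih1 ih2 =>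
    cases h2 with
    | node h3 h4 => exact .swap (ih1 h4) (ih2 h3)
    | swap h3 h4 => exact .node (ih1 h4) (ih2 h3)

lemma equivalence_equiv : Equivalence Equiv := ⟨Equiv.refl, Equiv.symm, Equiv.trans⟩

lemma mk_eq_mk {a b : RTree} : Quot.mk Equiv a = Quot.mk Equiv b ↔ Equiv a b := by
  rw [Quot.eq]
  exact Equivalence.eqvGen_iff equivalence_equiv

lemma Equiv.map {a b : RTree} (f : ℕ → ℕ) (h : Equiv a b) : Equiv (a.map f) (b.map f) := by
  induction h with
  | leaf => exact .leaf
  | node _ _ ih1 ih2 => exact .node ih1 ih2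
  | swap _ _ ih1 ih2 => exact .swap ih1 ih2

lemma Equiv.leaves {a b : RTree} (h : Equiv a b) : a.leaves = b.leaves := by
  induction h with
  | leaf => rfl
  | node _ _ ih1 ih2 => simp [RTree.leaves, ih1, ih2]
  | swap _ _ ih1 ih2 => simp [RTree.leaves, ih1, ih2]; omega

lemma Equiv.ranks {a b : RTree} (h : Equiv a b) : a.ranks = b.ranks := by
  induction h with
  | leaf => rfl
  | node _ _ ih1 ih2 => simp [RTree.ranks, ih1, ih2]
  | swap _ _ ih1 ih2 => simp [RTree.ranks, ih1, ih2, add_comm]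

lemma lt_of_mem_ranks : ∀ {t : RTree} {b r : ℕ}, IncreasingFrom b t → r ∈ t.ranks → b < r
  | leaf, b, r, _, hr => by simp [ranks] at hr
  | node k l rr, b, r, h, hr => by
    rcases h with ⟨h1, h2, h3⟩
    simp only [ranks, Multiset.mem_cons, Multiset.mem_add] at hr
    rcases hr with rfl | hr | hr
    · exact h1
    · exact h1.trans (lt_of_mem_ranks h2 hr)
    · exact h1.trans (lt_of_mem_ranks h3 hr)

lemma card_ranks : ∀ t : RTree, Multiset.card t.ranks + 1 = t.leaves
  | leaf => rfl
  | node k l r => by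
    have hl := card_ranks l
    have hr := card_ranks r
    simp only [ranks, leaves, Multiset.card_cons, Multiset.card_add]
    omega

lemma increasingFrom_map {f : ℕ → ℕ} {D : Set ℕ}
    (hf : ∀ a ∈ D, ∀ b ∈ D, a < b → f a < f b) :
    ∀ {t : RTree} {b c : ℕ}, IncreasingFrom b t → (∀ r ∈ t.ranks, r ∈ D) →
      (∀ r ∈ t.ranks, c < f r) → IncreasingFrom c (t.map f)
  | leaf, b, c, _, _, _ => trivial
  | node k l r, b, c, h, hD, hc => by
    rcases h with ⟨h1, h2, h3⟩
    have hk : k ∈ (node k l r).ranks := by simp [ranks]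
    refine ⟨hc k hk, ?_, ?_⟩
    · refine increasingFrom_map hf h2 (fun a ha => hD a (by simp [ranks, ha])) ?_
      intro a ha
      exact hf k (hD k hk) a (hD a (by simp [ranks, ha])) (lt_of_mem_ranks h2 ha)
    · refine increasingFrom_map hf h3 (fun a ha => hD a (by simp [ranks, ha])) ?_
      intro a ha
      exact hf k (hD k hk) a (hD a (by simp [ranks, ha])) (lt_of_mem_ranks h3 ha)

end RTree

namespace RTree

/-- Decompression: the increasing enumeration of `S` on `{1, …, S.card}`. -/
noncomputable def fS (n : ℕ) (S : Finset ℕ) (i : ℕ) : ℕ :=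
  if h : 1 ≤ i ∧ i - 1 < S.card then S.orderEmbOfFin rfl ⟨i - 1, h.2⟩ else i + n + 1

/-- Compression: position (1-based) of `r` within `S`. -/
noncomputable def gS (S : Finset ℕ) (r : ℕ) : ℕ :=
  if h : r ∈ S then ((S.orderIsoOfFin rfl).symm ⟨r, h⟩).val + 1 else 0

lemma fS_apply {n : ℕ} {S : Finset ℕ} {i : ℕ} (h1 : 1 ≤ i) (h2 : i - 1 < S.card) :
    fS n S i = S.orderEmbOfFin rfl ⟨i - 1, h2⟩ := dif_pos ⟨h1, h2⟩

lemma gS_apply {S : Finset ℕ} {r : ℕ} (h : r ∈ S) :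
    gS S r = ((S.orderIsoOfFin rfl).symm ⟨r, h⟩).val + 1 := dif_pos h

lemma fS_mem {n : ℕ} {S : Finset ℕ} {i : ℕ} (h1 : 1 ≤ i) (h2 : i ≤ S.card) :
    fS n S i ∈ S := by
  have h2' : i - 1 < S.card := by omega
  rw [fS_apply h1 h2']
  exact S.orderEmbOfFin_mem rfl _

lemma gS_bounds {S : Finset ℕ} {r : ℕ} (h : r ∈ S) : 1 ≤ gS S r ∧ gS S r ≤ S.card := by
  rw [gS_apply h]
  have := ((S.orderIsoOfFin rfl).symm ⟨r, h⟩).isLt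
  omega

lemma gS_fS {n : ℕ} {S : Finset ℕ} {i : ℕ} (h1 : 1 ≤ i) (h2 : i ≤ S.card) :
    gS S (fS n S i) = i := by
  have h2' : i - 1 < S.card := by omega
  have hmem : fS n S i ∈ S := fS_mem h1 h2
  rw [gS_apply hmem]
  have heq : (⟨fS n S i, hmem⟩ : {y // y ∈ S}) = (S.orderIsoOfFin rfl) ⟨i - 1, h2'⟩ := by
    apply Subtype.ext
    rw [Finset.coe_orderIsoOfFin_apply]
    exact fS_apply h1 h2'
  rw [heq, OrderIso.symm_apply_apply]
  show i - 1 + 1 = i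
  omega

lemma fS_gS {n : ℕ} {S : Finset ℕ} {r : ℕ} (h : r ∈ S) : fS n S (gS S r) = r := by
  rw [gS_apply h]
  set j := (S.orderIsoOfFin rfl).symm ⟨r, h⟩ with hj
  have hb : (j.val + 1) - 1 < S.card := by have := j.isLt; omega
  rw [fS_apply (by omega) hb]
  have heq : (⟨j.val + 1 - 1, hb⟩ : Fin S.card) = j := by
    apply Fin.ext; simp
  rw [heq, ← Finset.coe_orderIsoOfFin_apply, hj, OrderIso.apply_symm_apply]

lemma fS_lt {n : ℕ} {S : Finset ℕ} {a b : ℕ} (h1 : 1 ≤ a) (h2 : b ≤ S.card) (hab : a < b) :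
    fS n S a < fS n S b := by
  have ha : a - 1 < S.card := by omega
  have hb1 : 1 ≤ b := by omega
  have hb : b - 1 < S.card := by omega
  rw [fS_apply h1 ha, fS_apply hb1 hb]
  exact (S.orderEmbOfFin rfl).strictMono (by rw [Fin.lt_def]; simp; omega)

lemma gS_lt {S : Finset ℕ} {r r' : ℕ} (h : r ∈ S) (h' : r' ∈ S) (hrr : r < r') :
    gS S r < gS S r' := by
  rw [gS_apply h, gS_apply h']
  have hlt : ((S.orderIsoOfFin rfl).symm ⟨r, h⟩) < ((S.orderIsoOfFin rfl).symm ⟨r', h'⟩) :=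
    (S.orderIsoOfFin rfl).symm.strictMono (Subtype.mk_lt_mk.mpr hrr)
  have := Fin.lt_def.mp hlt
  omega

lemma map_val_of_image {f : ℕ → ℕ} {A B : Finset ℕ}
    (hinj : ∀ x ∈ A.val, ∀ y ∈ A.val, f x = f y → x = y)
    (him : Finset.image f A = B) : Multiset.map f A.val = B.val := by
  classical
  have hnd : (Multiset.map f A.val).Nodup := Multiset.Nodup.map_on hinj A.nodup
  rw [← him, Finset.image_val, Multiset.dedup_eq_self.mpr hnd]

lemma map_fS_Icc (n : ℕ) (S : Finset ℕ) :
    Multiset.map (fS n S) (Finset.Icc 1 S.card).val = S.val := by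
  classical
  apply map_val_of_image
  · intro a ha b hb hab
    have ha' := Finset.mem_Icc.mp (Finset.mem_def.mpr ha)
    have hb' := Finset.mem_Icc.mp (Finset.mem_def.mpr hb)
    by_contra hne
    rcases Nat.lt_or_ge a b with h | h
    · exact absurd hab (Nat.ne_of_lt (fS_lt ha'.1 hb'.2 h))
    · rcases Nat.lt_or_ge b a with h2 | h2
      · exact absurd hab.symm (Nat.ne_of_lt (fS_lt hb'.1 ha'.2 h2))
      · omega
  · ext y
    simp only [Finset.mem_image, Finset.mem_Icc]
    constructor
    · rintro ⟨i, ⟨hi1, hi2⟩, rfl⟩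
      exact fS_mem hi1 hi2
    · intro hy
      exact ⟨gS S y, ⟨(gS_bounds hy).1, (gS_bounds hy).2⟩, fS_gS hy⟩

lemma map_gS_Icc (S : Finset ℕ) :
    Multiset.map (gS S) S.val = (Finset.Icc 1 S.card).val := by
  classical
  apply map_val_of_image
  · intro a ha b hb hab
    by_contra hne
    rcases Nat.lt_or_ge a b with h | h
    · exact absurd hab (Nat.ne_of_lt (gS_lt ha hb h))
    · rcases Nat.lt_or_ge b a with h2 | h2
      · exact absurd hab.symm (Nat.ne_of_lt (gS_lt hb ha h2))
      · omega
  · ext y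
    simp only [Finset.mem_image, Finset.mem_Icc]
    constructor
    · rintro ⟨r, hr, rfl⟩
      exact gS_bounds hr
    · rintro ⟨hy1, hy2⟩
      exact ⟨fS 0 S y, fS_mem hy1 hy2, gS_fS hy1 hy2⟩

end RTree

namespace RTree

/-- Compose two standard-ranked trees into one, interleaving ranks along `S`. -/
noncomputable def comp (n : ℕ) (S : Finset ℕ) (u v : RTree) : RTree :=
  node 1 (u.map (fS n S)) (v.map (fS n (Finset.Icc 2 (n+1) \ S)))

/-- `comp` descends to ranked tree shapes. -/
noncomputable def compQ (n : ℕ) (S : Finset ℕ) :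
    Quot Equiv → Quot Equiv → Quot Equiv :=
  Quot.lift
    (fun u => Quot.lift (fun v => Quot.mk Equiv (comp n S u v))
      (fun v v' hv => Quot.sound (Equiv.node (Equiv.refl _) (hv.map _))))
    (fun u u' hu => by
      funext q
      induction q using Quot.ind with
      | _ v => exact Quot.sound (Equiv.node (hu.map _) (Equiv.refl _)))

lemma icc_insert (n : ℕ) : Finset.Icc 1 (n+1) = insert 1 (Finset.Icc 2 (n+1)) := by
  ext a
  simp only [Finset.mem_Icc, Finset.mem_insert]
  omega

lemma icc_one_val (n : ℕ) :
    (Finset.Icc 1 (n+1)).val = 1 ::ₘ (Finset.Icc 2 (n+1)).val := by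
  rw [icc_insert, Finset.insert_val_of_notMem (by simp)]

lemma comp_valid {x n : ℕ} (hn : 2 * x < n) {S : Finset ℕ}
    (hS : S ⊆ Finset.Icc 2 (n+1)) (hcard : S.card = x)
    {u v : RTree} (hu : u.Valid (x+1)) (hv : v.Valid (n-x+1)) :
    (comp n S u v).Valid (n+2) ∧ (comp n S u v).splitsInto (x+1) (n-x+1) := by
  have hxn : x ≤ n := by omega
  set T := Finset.Icc 2 (n+1) with hT
  have hTcard : T.card = n := by simp [hT, Nat.card_Icc]
  set S' := T \ S with hS'
  have hS'sub : S' ⊆ T := Finset.sdiff_subset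
  have hS'card : S'.card = n - x := by
    rw [hS', Finset.card_sdiff_of_subset hS, hTcard, hcard]
  obtain ⟨hul, hur, hui⟩ := hu
  obtain ⟨hvl, hvr, hvi⟩ := hv
  have huranks : u.ranks = (Finset.Icc 1 S.card).val := by
    rw [hur, hcard]; norm_num
  have hvranks : v.ranks = (Finset.Icc 1 S'.card).val := by
    rw [hvr, hS'card]; norm_num
  refine ⟨⟨?_, ?_, ?_⟩, ?_⟩
  · simp only [comp, leaves, leaves_map, hul, hvl]; omega
  · show (1 : ℕ) ::ₘ ((u.map (fS n S)).ranks + (v.map (fS n S')).ranks) = _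
    rw [ranks_map, ranks_map, huranks, hvranks, map_fS_Icc, map_fS_Icc]
    have hle : S.val ≤ T.val := Finset.val_le_iff.mpr hS
    have hsum : S.val + S'.val = T.val := by
      rw [hS', Finset.sdiff_val, add_comm]
      exact tsub_add_cancel_of_le hle
    rw [hsum]
    have : n + 2 - 1 = n + 1 := by omega
    rw [this, icc_one_val]
  · refine ⟨Nat.one_pos, ?_, ?_⟩
    · refine increasingFrom_map (D := {i | 1 ≤ i ∧ i ≤ S.card})
        (fun a ha b hb hab => fS_lt ha.1 hb.2 hab) hui ?_ ?_
      · intro r hr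
        rw [huranks, Finset.mem_def.symm, Finset.mem_Icc] at hr
        exact hr
      · intro r hr
        rw [huranks, Finset.mem_def.symm, Finset.mem_Icc] at hr
        have : fS n S r ∈ S := fS_mem hr.1 hr.2
        have := Finset.mem_Icc.mp (hS this)
        omega
    · refine increasingFrom_map (D := {i | 1 ≤ i ∧ i ≤ S'.card})
        (fun a ha b hb hab => fS_lt ha.1 hb.2 hab) hvi ?_ ?_
      · intro r hr
        rw [hvranks, Finset.mem_def.symm, Finset.mem_Icc] at hr
        exact hr
      · intro r hr
        rw [hvranks, Finset.mem_def.symm, Finset.mem_Icc] at hr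
        have : fS n S' r ∈ S' := fS_mem hr.1 hr.2
        have := Finset.mem_Icc.mp (hS'sub this)
        omega
  · left
    constructor <;> simp [comp, leaves, hul, hvl]

lemma decompose {x n : ℕ} (hn : 2 * x < n) {k : ℕ} {l r : RTree}
    (hval : (RTree.node k l r).Valid (n+2)) (hl : l.leaves = x+1) (hr : r.leaves = n-x+1) :
    ∃ S : Finset ℕ, S ⊆ Finset.Icc 2 (n+1) ∧ S.card = x ∧
      (l.map (gS S)).Valid (x+1) ∧
      (r.map (gS (Finset.Icc 2 (n+1) \ S))).Valid (n-x+1) ∧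
      comp n S (l.map (gS S)) (r.map (gS (Finset.Icc 2 (n+1) \ S))) = RTree.node k l r := by
  have hxn : x ≤ n := by omega
  set T := Finset.Icc 2 (n+1) with hT
  have hTcard : T.card = n := by simp [hT, Nat.card_Icc]
  obtain ⟨hleaves, hranks, hinc⟩ := hval
  obtain ⟨hk0, hil, hir⟩ := hinc
  have hranks' : k ::ₘ (l.ranks + r.ranks) = (Finset.Icc 1 (n+1)).val := by
    have h21 : n + 2 - 1 = n + 1 := rfl
    rw [h21] at hranks
    exact hranks
  -- root rank is 1
  have hk1 : k = 1 := by
    have h1mem : (1 : ℕ) ∈ (Finset.Icc 1 (n+1)).val := by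
      rw [← Finset.mem_def]; simp
    rw [← hranks'] at h1mem
    rcases Multiset.mem_cons.mp h1mem with h | h
    · omega
    · rcases Multiset.mem_add.mp h with h | h
      · have := lt_of_mem_ranks hil h; omega
      · have := lt_of_mem_ranks hir h; omega
  subst hk1
  have hsum : l.ranks + r.ranks = T.val := by
    have : (1 : ℕ) ::ₘ (l.ranks + r.ranks) = 1 ::ₘ T.val := by
      rw [hranks', icc_one_val]
    exact (Multiset.cons_inj_right 1).mp this
  have hTnodup : T.val.Nodup := T.nodup
  have hlnodup : l.ranks.Nodup :=
    Multiset.nodup_of_le (le_trans (Multiset.le_add_right _ _) (le_of_eq hsum)) hTnodup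
  set S : Finset ℕ := ⟨l.ranks, hlnodup⟩ with hSdef
  have hSval : S.val = l.ranks := rfl
  have hSsub : S ⊆ T := by
    intro a ha
    rw [Finset.mem_def] at ha ⊢
    rw [← hsum]
    exact Multiset.mem_add.mpr (Or.inl ha)
  have hScard : S.card = x := by
    have := card_ranks l
    rw [hl] at this
    show Multiset.card l.ranks = x
    omega
  have hrranks : r.ranks = (T \ S).val := by
    rw [Finset.sdiff_val, hSval, ← hsum]
    exact (add_tsub_cancel_left _ _).symm
  have hS'card : (T \ S).card = n - x := by
    rw [Finset.card_sdiff_of_subset hSsub, hTcard, hScard]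
  have hmeml : ∀ a ∈ l.ranks, a ∈ S := fun a ha => Finset.mem_def.mpr ha
  have hmemr : ∀ a ∈ r.ranks, a ∈ T \ S := by
    intro a ha
    rw [Finset.mem_def, ← hrranks]
    exact ha
  refine ⟨S, hSsub, hScard, ⟨?_, ?_, ?_⟩, ⟨?_, ?_, ?_⟩, ?_⟩
  · rw [leaves_map, hl]
  · rw [ranks_map, ← hSval, map_gS_Icc, hScard]
    norm_num
  · refine increasingFrom_map (D := (↑S : Set ℕ))
      (fun a ha b hb hab => gS_lt ha hb hab) hil (fun a ha => hmeml a ha) ?_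
    intro a ha
    have := (gS_bounds (hmeml a ha)).1
    omega
  · rw [leaves_map, hr]
  · rw [ranks_map, hrranks, map_gS_Icc, hS'card]
    norm_num
  · refine increasingFrom_map (D := (↑(T \ S) : Set ℕ))
      (fun a ha b hb hab => gS_lt ha hb hab) hir (fun a ha => hmemr a ha) ?_
    intro a ha
    have := (gS_bounds (hmemr a ha)).1
    omega
  · show node 1 _ _ = node 1 l r
    rw [map_map, map_map]
    rw [map_congr_id (fS n S ∘ gS S) l (fun a ha => fS_gS (hmeml a ha)),
        map_congr_id (fS n (T \ S) ∘ gS (T \ S)) r (fun a ha => fS_gS (hmemr a ha))]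

end RTree

/-- For fixed `x ≥ 0` and `n > 2x`, the number of ranked unlabeled tree shapes with
`n+2` leaves whose root splits into subtrees with `x+1` and `n-x+1` leaves equals
`C(n, x) e_x e_{n-x}`, where `e_i = R_{i+1}` counts ranked unlabeled tree shapes with
`i` internal nodes. -/
theorem ranked_rootSplit_count (x n : ℕ) (hn : 2 * x < n) :
    Nat.card {q : Quot RTree.Equiv //
        ∃ t : RTree, Quot.mk _ t = q ∧ t.Valid (n + 2) ∧
          t.splitsInto (x + 1) (n - x + 1)} =
      n.choose x * rankedCount (x + 1) * rankedCount (n - x + 1) := by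
  classical
  have hxn : x ≤ n := by omega
  have hTcard : (Finset.Icc 2 (n+1)).card = n := by simp [Nat.card_Icc]
  let Φ : ({S : Finset ℕ // S ⊆ Finset.Icc 2 (n+1) ∧ S.card = x} ×
      {q : Quot RTree.Equiv // ∃ t : RTree, Quot.mk _ t = q ∧ t.Valid (x+1)} ×
      {q : Quot RTree.Equiv // ∃ t : RTree, Quot.mk _ t = q ∧ t.Valid (n-x+1)}) →
      {q : Quot RTree.Equiv // ∃ t : RTree, Quot.mk _ t = q ∧ t.Valid (n + 2) ∧
        t.splitsInto (x + 1) (n - x + 1)} :=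
    fun p => ⟨RTree.compQ n p.1.1 p.2.1.1 p.2.2.1, by
      obtain ⟨u, hu, huv⟩ := p.2.1.2
      obtain ⟨v, hv, hvv⟩ := p.2.2.2
      refine ⟨RTree.comp n p.1.1 u v, ?_,
        (RTree.comp_valid hn p.1.2.1 p.1.2.2 huv hvv).1,
        (RTree.comp_valid hn p.1.2.1 p.1.2.2 huv hvv).2⟩
      rw [← hu, ← hv]
      rfl⟩
  have hbij : Function.Bijective Φ := by
    constructor
    · rintro ⟨⟨S, hSsub, hScard⟩, ⟨q1, hq1⟩, ⟨q2, hq2⟩⟩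
        ⟨⟨S', hSsub', hScard'⟩, ⟨q1', hq1'⟩, ⟨q2', hq2'⟩⟩ heq
      obtain ⟨u, hu, huv⟩ := hq1
      obtain ⟨v, hv, hvv⟩ := hq2
      obtain ⟨u', hu', huv'⟩ := hq1'
      obtain ⟨v', hv', hvv'⟩ := hq2'
      have hc : RTree.compQ n S q1 q2 = RTree.compQ n S' q1' q2' :=
        congrArg Subtype.val heq
      rw [← hu, ← hv, ← hu', ← hv'] at hc
      have hc3 : RTree.Equiv
          (RTree.node 1 (u.map (RTree.fS n S))
            (v.map (RTree.fS n (Finset.Icc 2 (n+1) \ S))))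
          (RTree.node 1 (u'.map (RTree.fS n S'))
            (v'.map (RTree.fS n (Finset.Icc 2 (n+1) \ S')))) :=
        RTree.mk_eq_mk.mp hc
      have huranks : u.ranks = (Finset.Icc 1 S.card).val := by
        rw [huv.2.1, hScard]; norm_num
      have huranks' : u'.ranks = (Finset.Icc 1 S'.card).val := by
        rw [huv'.2.1, hScard']; norm_num
      cases hc3 with
      | swap h1 h2 =>
        have hle := h1.leaves
        rw [RTree.leaves_map, RTree.leaves_map, huv.1, hvv'.1] at hle
        omega
      | node h1 h2 =>
        have hr1 := h1.ranks
        rw [RTree.ranks_map, RTree.ranks_map, huranks, huranks',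
          RTree.map_fS_Icc, RTree.map_fS_Icc] at hr1
        have hSS' : S = S' := Finset.val_inj.mp hr1
        subst hSS'
        have hq1eq : q1 = q1' := by
          rw [← hu, ← hu']
          apply RTree.mk_eq_mk.mpr
          have e1 : (u.map (RTree.fS n S)).map (RTree.gS S) = u := by
            rw [RTree.map_map]
            refine RTree.map_congr_id _ u (fun a ha => ?_)
            rw [huranks, ← Finset.mem_def, Finset.mem_Icc] at ha
            exact RTree.gS_fS ha.1 ha.2
          have e2 : (u'.map (RTree.fS n S)).map (RTree.gS S) = u' := by
            rw [RTree.map_map]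
            refine RTree.map_congr_id _ u' (fun a ha => ?_)
            rw [huranks', ← Finset.mem_def, Finset.mem_Icc] at ha
            exact RTree.gS_fS ha.1 ha.2
          rw [← e1, ← e2]
          exact h1.map _
        have hS'c : (Finset.Icc 2 (n+1) \ S).card = n - x := by
          rw [Finset.card_sdiff_of_subset hSsub, hTcard, hScard]
        have hvranks : v.ranks = (Finset.Icc 1 (Finset.Icc 2 (n+1) \ S).card).val := by
          rw [hvv.2.1, hS'c]; norm_num
        have hvranks' : v'.ranks = (Finset.Icc 1 (Finset.Icc 2 (n+1) \ S).card).val := by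
          rw [hvv'.2.1, hS'c]; norm_num
        have hq2eq : q2 = q2' := by
          rw [← hv, ← hv']
          apply RTree.mk_eq_mk.mpr
          have e1 : (v.map (RTree.fS n (Finset.Icc 2 (n+1) \ S))).map
              (RTree.gS (Finset.Icc 2 (n+1) \ S)) = v := by
            rw [RTree.map_map]
            refine RTree.map_congr_id _ v (fun a ha => ?_)
            rw [hvranks, ← Finset.mem_def, Finset.mem_Icc] at ha
            exact RTree.gS_fS ha.1 ha.2
          have e2 : (v'.map (RTree.fS n (Finset.Icc 2 (n+1) \ S))).map
              (RTree.gS (Finset.Icc 2 (n+1) \ S)) = v' := by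
            rw [RTree.map_map]
            refine RTree.map_congr_id _ v' (fun a ha => ?_)
            rw [hvranks', ← Finset.mem_def, Finset.mem_Icc] at ha
            exact RTree.gS_fS ha.1 ha.2
          rw [← e1, ← e2]
          exact h2.map _
        subst hq1eq
        subst hq2eq
        rfl
    · rintro ⟨q, hq⟩
      have key : ∀ (k : ℕ) (l r : RTree), Quot.mk RTree.Equiv (RTree.node k l r) = q →
          (RTree.node k l r).Valid (n+2) → l.leaves = x+1 → r.leaves = n-x+1 →
          ∃ a, (Φ a).val = q := by
        intro k l r hmk hv hl hr
        obtain ⟨S, hSsub, hScard, hul, hvr, hcomp⟩ := RTree.decompose hn hv hl hr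
        refine ⟨⟨⟨S, hSsub, hScard⟩,
          ⟨Quot.mk _ (l.map (RTree.gS S)), ⟨_, rfl, hul⟩⟩,
          ⟨Quot.mk _ (r.map (RTree.gS (Finset.Icc 2 (n+1) \ S))), ⟨_, rfl, hvr⟩⟩⟩, ?_⟩
        show Quot.mk RTree.Equiv (RTree.comp n S _ _) = q
        rw [hcomp]
        exact hmk
      obtain ⟨t, htq, hval, hsplit⟩ := hq
      have hkey : ∃ a, (Φ a).val = q := by
        cases t with
        | leaf => exact hsplit.elim
        | node k l r =>
          rcases hsplit with ⟨h1, h2⟩ | ⟨h1, h2⟩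
          · exact key k l r htq hval h1 h2
          · refine key k r l ?_ ?_ h2 h1
            · rw [← htq]
              exact Quot.sound (RTree.Equiv.swap (RTree.Equiv.refl r) (RTree.Equiv.refl l))
            · obtain ⟨hv1, hv2, hv3⟩ := hval
              refine ⟨?_, ?_, hv3.1, hv3.2.2, hv3.2.1⟩
              · show r.leaves + l.leaves = n + 2
                have : l.leaves + r.leaves = n + 2 := hv1
                omega
              · show k ::ₘ (r.ranks + l.ranks) = _
                rw [add_comm]
                exact hv2
      obtain ⟨a, ha⟩ := hkey
      exact ⟨a, Subtype.ext ha⟩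
  rw [← Nat.card_eq_of_bijective Φ hbij]
  rw [Nat.card_prod, Nat.card_prod]
  have h1 : Nat.card {S : Finset ℕ // S ⊆ Finset.Icc 2 (n+1) ∧ S.card = x}
      = n.choose x := by
    rw [Nat.card_congr (Equiv.subtypeEquivRight
      (fun S => (Finset.mem_powersetCard (s := S) (t := Finset.Icc 2 (n+1))).symm))]
    rw [Nat.card_eq_finsetCard, Finset.card_powersetCard, hTcard]
  rw [h1]
  unfold rankedCount
  ring
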